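/- Let f₀, f₁, f₂, f₃ : E → E be affine maps and let ℓ be a line in E. If there exist four pairwise distinct points X on ℓ such that the four homologous images f₀(X), f₁(X), f₂(X), f₃(X) are coplanar, then for every point X of ℓ the four points f₀(X), f₁(X), f₂(X), f₃(X) are coplanar. -/

import Mathlib

noncomputable section

abbrev E : Type := EuclideanSpace ℝ (Fin 3)

/-- A line: a one-dimensional affine subspace. -/
def IsLine (s : AffineSubspace ℝ E) : Prop := Module.finrank ℝ s.direction = 1

/-- A plane: a two-dimensional affine subspace. -/
def IsPlane (s : AffineSubspace ℝ E) : Prop := Module.finrank ℝ s.direction = 2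

/-- A set of points lies on a circle or a line: it is concyclic (contained in the
intersection of a sphere and a plane) or collinear. -/
def ConcyclicOrCollinear (s : Set E) : Prop :=
  EuclideanGeometry.Concyclic s ∨ Collinear ℝ s

/-- `τ` is a rotation with axis `r`: an isometry different from the identity whose
linear part has determinant 1 and which fixes every point of the line `r`. -/
def IsRotation (τ : E ≃ᵃⁱ[ℝ] E) (r : AffineSubspace ℝ E) : Prop :=
  τ ≠ AffineIsometryEquiv.refl ℝ E ∧
  LinearMap.det (τ.linearIsometryEquiv.toLinearEquiv : E →ₗ[ℝ] E) = 1 ∧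
  IsLine r ∧ ∀ x ∈ r, τ x = x

/-- `(α 0, α 1, α 2, α 3)` is a rotation quadrangle with relative revolute axes
`r i` (in the moving space): each relative displacement `τ_{i,i+1} = α (i+1) ∘ (α i)⁻¹`
is a rotation whose axis is the image `α i (r i)`. -/
def IsRotationQuadrangle (α : Fin 4 → (E ≃ᵃⁱ[ℝ] E)) (r : Fin 4 → AffineSubspace ℝ E) : Prop :=
  ∀ i : Fin 4,
    IsRotation ((α i).symm.trans (α (i + 1)))
      ((r i).map (α i).toAffineIsometry.toAffineMap)


open Polynomial Matrix in
private lemma coplanar_iff_det_aux (q : Fin 4 → E) :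
    Coplanar ℝ (Set.range q) ↔
      Matrix.det (Matrix.of fun i j : Fin 3 => (q i.succ - q 0) j) = 0 := by
  classical
  set d : Fin 3 → E := fun i => q i.succ - q 0 with hd
  have hspan : vectorSpan ℝ (Set.range q) = Submodule.span ℝ (Set.range d) := by
    rw [vectorSpan_range_eq_span_range_vsub_right ℝ q 0]
    apply le_antisymm
    · rw [Submodule.span_le]
      rintro x ⟨j, rfl⟩
      induction j using Fin.cases with
      | zero => simp [Submodule.zero_mem]
      | succ i =>
          exact Submodule.subset_span ⟨i, by simp [hd, vsub_eq_sub]⟩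
    · rw [Submodule.span_le]
      rintro x ⟨i, rfl⟩
      exact Submodule.subset_span ⟨i.succ, by simp [hd, vsub_eq_sub]⟩
  have hli : ¬ LinearIndependent ℝ d ↔
      Matrix.det (Matrix.of fun i j : Fin 3 => d i j) = 0 := by
    rw [← Matrix.exists_vecMul_eq_zero_iff, Fintype.not_linearIndependent_iff]
    constructor
    · rintro ⟨g, hg, i, hi⟩
      refine ⟨g, fun h => hi (by rw [h]; rfl), ?_⟩
      ext j
      have := congrArg (fun x : E => x j) hg
      simpa [Matrix.vecMul, dotProduct, Finset.sum_apply] using this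
    · rintro ⟨g, hg0, hg⟩
      refine ⟨g, ?_, ?_⟩
      · ext j
        have := congrFun hg j
        simpa [Matrix.vecMul, dotProduct, Finset.sum_apply] using this
      · by_contra h
        push_neg at h
        exact hg0 (funext fun i => h i)
  constructor
  · intro hcop
    rw [← hli]
    intro hind
    have h3 : Module.rank ℝ (Submodule.span ℝ (Set.range d)) = 3 := by
      rw [rank_span hind, Cardinal.mk_range_eq _ hind.injective, Cardinal.mk_fin]
      norm_num
    have : Module.rank ℝ (vectorSpan ℝ (Set.range q)) ≤ 2 := hcop
    rw [hspan, h3] at this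
    norm_num at this
  · intro hdet
    have hnli := hli.mpr hdet
    have hle : Set.finrank ℝ (Set.range d) ≤ 2 := by
      have h1 : Set.finrank ℝ (Set.range d) ≤ 3 := by
        simpa using finrank_range_le_card d
      rcases lt_or_eq_of_le h1 with h | h
      · omega
      · exact absurd (linearIndependent_iff_card_eq_finrank_span.mpr (by simpa using h.symm)) hnli
    show Module.rank ℝ (vectorSpan ℝ (Set.range q)) ≤ 2
    rw [hspan]
    have : FiniteDimensional ℝ (Submodule.span ℝ (Set.range d)) :=
      FiniteDimensional.span_of_finite ℝ (Set.finite_range d)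
    rw [← Module.finrank_eq_rank]
    exact_mod_cast hle

/-- If the homologous images under four affine maps of four pairwise
distinct points of a line are coplanar, then this holds for every point of the line. -/
theorem coplanar_homologous_images_of_four
    (f : Fin 4 → (E →ᵃ[ℝ] E)) (ℓ : AffineSubspace ℝ E) (hℓ : IsLine ℓ)
    (P : Fin 4 → E) (hP : ∀ j, P j ∈ ℓ) (hPdist : Function.Injective P)
    (hcop : ∀ j, Coplanar ℝ (Set.range fun i : Fin 4 => f i (P j))) :
    ∀ X ∈ ℓ, Coplanar ℝ (Set.range fun i : Fin 4 => f i X) := by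
  classical
  open Polynomial Matrix in
  obtain ⟨v, hv0, hvspan⟩ := finrank_eq_one_iff'.mp hℓ
  set A : E := P 0 with hA
  have hparam : ∀ X ∈ ℓ, ∃ t : ℝ, X = A + t • (v : E) := by
    intro X hX
    obtain ⟨t, ht⟩ := hvspan ⟨X - A, AffineSubspace.vsub_mem_direction hX (hP 0)⟩
    refine ⟨t, ?_⟩
    have := congrArg (Subtype.val) ht
    simp only [SetLike.val_smul] at this
    rw [this]; abel
  have hmap : ∀ (j : Fin 4) (t : ℝ),
      f j (A + t • (v : E)) = f j A + t • (f j).linear v := by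
    intro j t
    have h : A + t • (v : E) = (t • (v : E)) +ᵥ A := by
      simp [vadd_eq_add]; abel
    rw [h, AffineMap.map_vadd, (f j).linear.map_smul]
    simp [vadd_eq_add]; abel
  set Mu : Matrix (Fin 3) (Fin 3) ℝ :=
    Matrix.of fun i j => (f i.succ A - f 0 A) j with hMu
  set Mw : Matrix (Fin 3) (Fin 3) ℝ :=
    Matrix.of fun i j => ((f i.succ).linear v - (f 0).linear v) j with hMw
  set p : Polynomial ℝ :=
    Matrix.det ((Polynomial.X : Polynomial ℝ) • Mw.map Polynomial.C + Mu.map Polynomial.C)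
    with hp
  have hdeg : p.natDegree ≤ 3 := by
    simpa using Polynomial.natDegree_det_X_add_C_le Mw Mu
  have heval : ∀ t : ℝ, p.eval t =
      Matrix.det (Matrix.of fun i j : Fin 3 =>
        ((f i.succ (A + t • (v : E)) - f 0 (A + t • (v : E))) j)) := by
    intro t
    have h1 : p.eval t = Matrix.det
        (((Polynomial.X : Polynomial ℝ) • Mw.map Polynomial.C + Mu.map Polynomial.C).map
          (Polynomial.evalRingHom t)) := by
      rw [hp, ← Polynomial.coe_evalRingHom, RingHom.map_det]; rfl
    rw [h1]
    congr 1
    ext i j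
    simp only [Matrix.of_apply]
    rw [hmap i.succ t, hmap 0 t]
    simp only [Matrix.map_apply, Matrix.add_apply, Matrix.smul_apply, Matrix.of_apply,
      smul_eq_mul, map_add, _root_.map_mul, Polynomial.coe_evalRingHom, Polynomial.eval_mul,
      Polynomial.eval_add, Polynomial.eval_C, Polynomial.eval_X, hMu, hMw]
    have : f i.succ A + t • (f i.succ).linear v - (f 0 A + t • (f 0).linear v)
        = (f i.succ A - f 0 A) + t • ((f i.succ).linear v - (f 0).linear v) := by
      rw [smul_sub]; abel
    rw [this]
    simp only [PiLp.add_apply, PiLp.sub_apply, PiLp.smul_apply, smul_eq_mul]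
    ring
  choose τ hτ using fun j => hparam (P j) (hP j)
  have hτinj : Function.Injective τ := by
    intro j k hjk
    apply hPdist
    rw [hτ j, hτ k, hjk]
  have hz : ∀ j, p.eval (τ j) = 0 := by
    intro j
    rw [heval (τ j), ← hτ j]
    exact (coplanar_iff_det_aux fun i => f i (P j)).mp (hcop j)
  have hp0 : p = 0 := by
    refine Polynomial.eq_zero_of_natDegree_lt_card_of_eval_eq_zero p hτinj hz ?_
    simp only [Fintype.card_fin]
    omega
  intro X hX
  obtain ⟨t, rfl⟩ := hparam X hX
  rw [coplanar_iff_det_aux]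
  have := heval t
  rw [hp0] at this
  simpa using this.symm
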